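/- arXiv:2002.09065 — 4 statements merged into one kernel-verified Lean document; each statement's English description precedes it below -/
import Mathlib

section
/- For all u, v ∈ [-1, 1] and all α, β ≥ 0 with α + β > 0, one has (1+u)(1+v) - (2/(α+β))·(α·u·(1+v) + β·v·(1+u)) ≥ 0. -/
theorem measure_positivity (u v α β : ℝ) (hu : u ∈ Set.Icc (-1 : ℝ) 1)
    (hv : v ∈ Set.Icc (-1 : ℝ) 1) (hα : 0 ≤ α) (hβ : 0 ≤ β) (hαβ : 0 < α + β) :
    0 ≤ (1 + u) * (1 + v) - 2 / (α + β) * (α * u * (1 + v) + β * v * (1 + u)) := by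
  obtain ⟨hu1, hu2⟩ := hu
  obtain ⟨hv1, hv2⟩ := hv
  rw [sub_nonneg, div_mul_eq_mul_div, div_le_iff₀ hαβ]
  nlinarith [mul_nonneg (mul_nonneg hα (by linarith : (0:ℝ) ≤ 1 + v)) (by linarith : (0:ℝ) ≤ 1 - u),
    mul_nonneg (mul_nonneg hβ (by linarith : (0:ℝ) ≤ 1 + u)) (by linarith : (0:ℝ) ≤ 1 - v)]
end

section
/- Let k ≥ 1 be an integer, b > 0 a real number, ξ ∈ [-1,1], and q = arccos(ξ). Then for all complex s with Re(s) large enough, setting S = √(s² - b²), one has (s+S)^k - 2·b^k·ξ + (s-S)^k = 2^k · ∏_{l=0}^{k-1} (s - b·cos((q - 2πl)/k)). -/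
open Complex Finset in
private lemma prod_pow_sub (k : ℕ) (hk : k ≠ 0) (u α : ℂ) :
    u ^ k - α ^ k = ∏ l ∈ Finset.range k,
      (u - Complex.exp (2 * Real.pi * Complex.I / k) ^ l * α) := by
  have hζ := Complex.isPrimitiveRoot_exp k hk
  have h := X_pow_sub_C_eq_prod hζ (Nat.pos_of_ne_zero hk) (rfl : α ^ k = α ^ k)
  have h2 := congrArg (Polynomial.eval u) h
  simpa [Polynomial.eval_prod] using h2

open Complex Finset in
private lemma prod_pow_sub' (k : ℕ) (hk : k ≠ 0) (u α : ℂ) :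
    u ^ k - α ^ k = ∏ l ∈ Finset.range k,
      (u - (Complex.exp (2 * Real.pi * Complex.I / k))⁻¹ ^ l * α) := by
  have hζ := (Complex.isPrimitiveRoot_exp k hk).inv
  have h := X_pow_sub_C_eq_prod hζ (Nat.pos_of_ne_zero hk) (rfl : α ^ k = α ^ k)
  have h2 := congrArg (Polynomial.eval u) h
  simpa [Polynomial.eval_prod] using h2

open Complex in
theorem dihedral_factorization (k : ℕ) (hk : 1 ≤ k) (b : ℝ) (hb : 0 < b)
    (ξ : ℝ) (hξ : ξ ∈ Set.Icc (-1 : ℝ) 1) :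
    ∃ M : ℝ, ∀ s : ℂ, M < s.re →
      (s + (s ^ 2 - (b : ℂ) ^ 2) ^ ((1 : ℂ)/2)) ^ k - 2 * (b : ℂ) ^ k * (ξ : ℂ)
          + (s - (s ^ 2 - (b : ℂ) ^ 2) ^ ((1 : ℂ)/2)) ^ k
        = 2 ^ k * ∏ l ∈ Finset.range k,
            (s - (b * Real.cos ((Real.arccos ξ - 2 * Real.pi * l) / k) : ℝ)) := by
  refine ⟨0, fun s _ => ?_⟩
  have hkne : k ≠ 0 := by omega
  have hkC : (k : ℂ) ≠ 0 := Nat.cast_ne_zero.mpr hkne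
  have hbC : (b : ℂ) ≠ 0 := by exact_mod_cast hb.ne'
  set q := Real.arccos ξ with hqdef
  set S := (s ^ 2 - (b : ℂ) ^ 2) ^ ((1 : ℂ)/2) with hSdef
  have hS2 : S ^ 2 = s ^ 2 - (b : ℂ) ^ 2 := by
    by_cases h : s ^ 2 - (b : ℂ) ^ 2 = 0
    · rw [hSdef, h, Complex.zero_cpow (by norm_num)]
      exact zero_pow two_ne_zero
    · rw [hSdef, sq, ← Complex.cpow_add _ _ h]
      norm_num
  set u := s + S with hudef
  set v := s - S with hvdef
  have huv : u * v = (b : ℂ) ^ 2 := by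
    rw [hudef, hvdef]; linear_combination -hS2
  have hsumuv : u + v = 2 * s := by rw [hudef, hvdef]; ring
  have huvne : u * v ≠ 0 := by rw [huv]; exact pow_ne_zero 2 hbC
  have hu : u ≠ 0 := left_ne_zero_of_mul huvne
  set ζ := Complex.exp (2 * Real.pi * Complex.I / k) with hζdef
  set α := (b : ℂ) * Complex.exp (Complex.I * q / k) with hαdef
  set β := (b : ℂ) * Complex.exp (-(Complex.I * q / k)) with hβdef
  have hαk : α ^ k = (b : ℂ) ^ k * Complex.exp (Complex.I * q) := by
    rw [hαdef, mul_pow, ← Complex.exp_nat_mul,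
      show (k : ℂ) * (Complex.I * q / k) = Complex.I * q by field_simp]
  have hβk : β ^ k = (b : ℂ) ^ k * Complex.exp (-(Complex.I * q)) := by
    rw [hβdef, mul_pow, ← Complex.exp_nat_mul,
      show (k : ℂ) * (-(Complex.I * q / k)) = -(Complex.I * q) by field_simp]
  have hcosq : Complex.exp (Complex.I * q) + Complex.exp (-(Complex.I * q)) = 2 * (ξ : ℂ) := by
    have hc : Complex.cos (q : ℂ) = (ξ : ℂ) := by
      rw [← Complex.ofReal_cos, hqdef, Real.cos_arccos hξ.1 hξ.2]
    rw [show Complex.I * (q : ℂ) = (q : ℂ) * Complex.I from mul_comm _ _,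
      show -((q : ℂ) * Complex.I) = (-(q : ℂ)) * Complex.I by ring,
      Complex.exp_mul_I, Complex.exp_mul_I, Complex.cos_neg, Complex.sin_neg, hc]
    ring
  refine mul_left_cancel₀ (pow_ne_zero k hu) ?_
  have key : u ^ k * (u ^ k - 2 * (b : ℂ) ^ k * (ξ : ℂ) + v ^ k)
      = (u ^ k - α ^ k) * (u ^ k - β ^ k) := by
    have h1 : u ^ k * v ^ k = ((b : ℂ) ^ 2) ^ k := by rw [← mul_pow, huv]
    have h2 : α ^ k * β ^ k = ((b : ℂ) ^ 2) ^ k := by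
      rw [hαk, hβk, ← pow_mul]
      rw [show (b:ℂ)^k * Complex.exp (Complex.I * q) * ((b:ℂ)^k * Complex.exp (-(Complex.I * q)))
        = (b:ℂ)^(k*2) * (Complex.exp (Complex.I * q) * Complex.exp (-(Complex.I * q))) by
          rw [pow_mul]; ring]
      rw [← Complex.exp_add, show Complex.I * (q:ℂ) + -(Complex.I * q) = 0 by ring,
        Complex.exp_zero, mul_one, mul_comm 2 k]
    have h3 : α ^ k + β ^ k = 2 * (b : ℂ) ^ k * (ξ : ℂ) := by
      rw [hαk, hβk, ← mul_add, hcosq]; ring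
    linear_combination h1 - h2 + u ^ k * h3
  rw [key, prod_pow_sub' k hkne u α, prod_pow_sub k hkne u β, ← hζdef,
    ← Finset.prod_mul_distrib]
  have perl : ∀ l ∈ Finset.range k, (u - ζ⁻¹ ^ l * α) * (u - ζ ^ l * β)
      = 2 * u * (s - ((b * Real.cos ((q - 2 * Real.pi * l) / k) : ℝ) : ℂ)) := by
    intro l _
    set θ : ℝ := (q - 2 * Real.pi * l) / k with hθdef
    have e1 : ζ⁻¹ ^ l * α = (b : ℂ) * Complex.exp ((θ : ℝ) * Complex.I) := by
      rw [hζdef, hαdef, ← Complex.exp_neg, ← Complex.exp_nat_mul, mul_left_comm,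
        ← Complex.exp_add]
      have harg : (l : ℂ) * -(2 * Real.pi * Complex.I / k) + Complex.I * q / k
          = ((θ : ℝ) : ℂ) * Complex.I := by
        rw [hθdef]; push_cast; field_simp; ring
      rw [harg]
    have e2 : ζ ^ l * β = (b : ℂ) * Complex.exp ((-(θ : ℝ) : ℂ) * Complex.I) := by
      rw [hζdef, hβdef, ← Complex.exp_nat_mul, mul_left_comm, ← Complex.exp_add]
      have harg : (l : ℂ) * (2 * Real.pi * Complex.I / k) + -(Complex.I * q / k)
          = (-((θ : ℝ) : ℂ)) * Complex.I := by
        rw [hθdef]; push_cast; field_simp; ring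
      rw [harg]
    rw [e1, e2]
    have hsum : Complex.exp ((θ : ℝ) * Complex.I) + Complex.exp ((-(θ : ℝ) : ℂ) * Complex.I)
        = 2 * ((Real.cos θ : ℝ) : ℂ) := by
      rw [Complex.exp_mul_I, Complex.exp_mul_I, Complex.cos_neg, Complex.sin_neg,
        ← Complex.ofReal_cos]
      ring
    have hprod : Complex.exp ((θ : ℝ) * Complex.I) * Complex.exp ((-(θ : ℝ) : ℂ) * Complex.I)
        = 1 := by
      rw [← Complex.exp_add, show ((θ:ℝ) : ℂ) * Complex.I + (-(θ:ℝ) : ℂ) * Complex.I = 0 by ring,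
        Complex.exp_zero]
    rw [Complex.ofReal_mul]
    linear_combination (b:ℂ)^2 * hprod + (-(b:ℂ) * u) * hsum + u * hsumuv - huv
  rw [Finset.prod_congr rfl perl, Finset.prod_mul_distrib, Finset.prod_const,
    Finset.card_range, mul_pow]
  ring
end

section
/- For the rank-one Dunkl operator with parameter k > 0, the operator V_k defined on polynomials p of one variable by V_k(p)(x) = (Γ(k+1/2)/(Γ(1/2)Γ(k))) ∫₋₁¹ p(xt)(1-t)^{k-1}(1+t)^k dt satisfies V_k(1) = 1 and T V_k(p) = V_k(p') for all polynomials p, where Tf(x) = f'(x) + k·(f(x)-f(-x))/x. -/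
/-- The rank-one Dunkl operator with multiplicity `k`. -/
noncomputable def dunklT1 (k : ℝ) (f : ℝ → ℝ) (x : ℝ) : ℝ :=
  deriv f x + k * (f x - f (-x)) / x

/-- The rank-one Dunkl intertwining operator. -/
noncomputable def dunklV1 (k : ℝ) (p : Polynomial ℝ) (x : ℝ) : ℝ :=
  (Real.Gamma (k + 1/2) / (Real.Gamma (1/2) * Real.Gamma k)) *
    ∫ t in (-1:ℝ)..1, p.eval (x * t) * (1 - t) ^ (k - 1) * (1 + t) ^ k

section DunklAux

open MeasureTheory intervalIntegral Real Set Filter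



lemma dunklBeta {a b : ℝ} (ha : 0 < a) (hb : 0 < b) :
    Real.Gamma a * Real.Gamma b
      = Real.Gamma (a + b) * ∫ x in (0:ℝ)..1, x ^ (a-1) * (1-x) ^ (b-1) := by
  have h := Complex.Gamma_mul_Gamma_eq_betaIntegral (s := a) (t := b)
    (by simpa using ha) (by simpa using hb)
  rw [← Complex.ofReal_inj]
  rw [Complex.ofReal_mul, ← Complex.Gamma_ofReal, ← Complex.Gamma_ofReal, h,
    Complex.ofReal_mul, ← Complex.Gamma_ofReal, Complex.ofReal_add]
  congr 1
  rw [Complex.betaIntegral, ← intervalIntegral.integral_ofReal]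
  refine intervalIntegral.integral_congr fun x hx => ?_
  rw [Set.uIcc_of_le (by norm_num : (0:ℝ) ≤ 1)] at hx
  rw [Complex.ofReal_mul, Complex.ofReal_cpow hx.1, Complex.ofReal_cpow (by linarith [hx.2])]
  push_cast
  ring

lemma dunklMaster {a b : ℝ} (ha : -1 < a) (hb : -1 < b) {g : ℝ → ℝ} (hg : Continuous g) :
    IntervalIntegrable (fun t => g t * ((1-t) ^ a * (1+t) ^ b)) volume (-1) 1 := by
  have h1 : IntervalIntegrable (fun t : ℝ => (1-t) ^ a) volume 0 1 := by
    have := (intervalIntegrable_rpow' (a := 0) (b := 1) ha).comp_sub_left 1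
    simpa using this.symm
  have h2 : IntervalIntegrable (fun t : ℝ => (1+t) ^ b) volume (-1) 0 := by
    have := (intervalIntegrable_rpow' (a := 0) (b := 1) hb).comp_add_right 1
    simpa [add_comm] using this
  apply IntervalIntegrable.trans (b := 0)
  · have hc : ContinuousOn (fun t : ℝ => g t * (1-t) ^ a) (uIcc (-1) 0) := by
      apply hg.continuousOn.mul
      intro t ht
      rw [uIcc_of_le (by norm_num)] at ht
      exact ((Real.continuousAt_rpow_const _ _ (Or.inl (by nlinarith [ht.2] : (1:ℝ)-t ≠ 0))).comp
        (by fun_prop)).continuousWithinAt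
    have h := h2.continuousOn_mul hc
    have e : (fun t : ℝ => g t * ((1-t) ^ a * (1+t) ^ b))
        = fun t => g t * (1-t) ^ a * (1+t) ^ b := by funext t; ring
    rw [e]; exact h
  · have hc : ContinuousOn (fun t : ℝ => g t * (1+t) ^ b) (uIcc 0 1) := by
      apply hg.continuousOn.mul
      intro t ht
      rw [uIcc_of_le (by norm_num)] at ht
      exact ((Real.continuousAt_rpow_const _ _ (Or.inl (by nlinarith [ht.1] : (1:ℝ)+t ≠ 0))).comp
        (by fun_prop)).continuousWithinAt
    have h := h1.continuousOn_mul hc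
    have e : (fun t : ℝ => g t * ((1-t) ^ a * (1+t) ^ b))
        = fun t => g t * (1+t) ^ b * (1-t) ^ a := by funext t; ring
    rw [e]; exact h

lemma dunklAeIoo {a b : ℝ} (hab : a ≤ b) {f g : ℝ → ℝ} (h : ∀ t ∈ Ioo a b, f t = g t) :
    f =ᵐ[volume.restrict (Set.uIoc a b)] g := by
  rw [Filter.EventuallyEq, ae_restrict_iff' measurableSet_uIoc]
  filter_upwards [(Set.countable_singleton b).ae_notMem volume] with t ht hmem
  rw [uIoc_of_le hab] at hmem
  exact h t ⟨hmem.1, lt_of_le_of_ne hmem.2 (by simpa using ht)⟩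

lemma dunklIntCongr {a b : ℝ} (hab : a ≤ b) {f g : ℝ → ℝ} (h : ∀ t ∈ Ioo a b, f t = g t) :
    ∫ t in a..b, f t = ∫ t in a..b, g t :=
  intervalIntegral.integral_congr_ae <| by
    filter_upwards [(Set.countable_singleton b).ae_notMem volume] with t ht hmem
    rw [uIoc_of_le hab] at hmem
    exact h t ⟨hmem.1, lt_of_le_of_ne hmem.2 (by simpa using ht)⟩

noncomputable def dunklI (k : ℝ) (n : ℕ) : ℝ :=
  ∫ t in (-1:ℝ)..1, t^n * ((1-t) ^ (k-1) * (1+t) ^ k)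

noncomputable def dunklA (k : ℝ) (n : ℕ) : ℝ :=
  ∫ t in (-1:ℝ)..1, t^n * (1-t^2) ^ (k-1)

variable {k : ℝ} (hk : 0 < k)

include hk in
lemma dunklIntI {g : ℝ → ℝ} (hg : Continuous g) :
    IntervalIntegrable (fun t => g t * ((1-t) ^ (k-1) * (1+t) ^ k)) volume (-1) 1 := by
  refine (dunklMaster (a := k-1) (b := k-1) (by linarith) (by linarith)
    (g := fun t => g t * (1+t)) (by fun_prop)).congr_ae (dunklAeIoo (by norm_num) fun t ht => ?_)
  have e : (1+t) ^ k = (1+t) ^ (k-1) * (1+t) := by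
    rw [← Real.rpow_add_one (by linarith [ht.1] : (1:ℝ)+t ≠ 0), sub_add_cancel]
  rw [e]; ring

include hk in
lemma dunklIntA {g : ℝ → ℝ} (hg : Continuous g) :
    IntervalIntegrable (fun t => g t * (1-t^2) ^ (k-1)) volume (-1) 1 := by
  refine (dunklMaster (a := k-1) (b := k-1) (by linarith) (by linarith) (g := g) hg).congr_ae
    (dunklAeIoo (by norm_num) fun t ht => ?_)
  rw [← Real.mul_rpow (by linarith [ht.2]) (by linarith [ht.1]),
    show (1-t)*(1+t) = 1 - t^2 by ring]

include hk in
lemma dunklI_eq_A (n : ℕ) : dunklI k n = dunklA k n + dunklA k (n+1) := by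
  unfold dunklI dunklA
  rw [← intervalIntegral.integral_add (dunklIntA hk (g := fun t => t^n) (by fun_prop))
    (dunklIntA hk (g := fun t => t^(n+1)) (by fun_prop))]
  refine dunklIntCongr (by norm_num) fun t ht => ?_
  have e : (1+t) ^ k = (1+t) ^ (k-1) * (1+t) := by
    rw [← Real.rpow_add_one (by linarith [ht.1] : (1:ℝ)+t ≠ 0), sub_add_cancel]
  rw [e, show (1:ℝ) - t^2 = (1-t)*(1+t) by ring,
    Real.mul_rpow (by linarith [ht.2]) (by linarith [ht.1])]
  ring

lemma dunklA_odd (m : ℕ) (hm : Odd m) : dunklA k m = 0 := by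
  unfold dunklA
  have h := intervalIntegral.integral_comp_neg (a := (-1:ℝ)) (b := 1)
    (fun t => t^m * (1-t^2) ^ (k-1))
  simp only [neg_neg] at h
  have h2 : ∀ x : ℝ, (-x)^m * (1-(-x)^2) ^ (k-1) = -(x^m * (1-x^2) ^ (k-1)) := by
    intro x
    rw [hm.neg_pow, neg_pow_two]
    ring
  simp only [h2, intervalIntegral.integral_neg] at h
  linarith

include hk in
lemma dunklIbp (n : ℕ) :
    ((n:ℝ)+1) * dunklA k n = ((n:ℝ)+1+2*k) * dunklA k (n+2) := by
  set f' : ℝ → ℝ := fun t =>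
    ((n:ℝ)+1) * (t^n * (1-t^2) ^ k) - 2*k * (t^(n+2) * (1-t^2) ^ (k-1)) with hf'
  have hcont : ContinuousOn (fun t : ℝ => t^(n+1) * (1-t^2) ^ k) (Icc (-1) 1) :=
    (Continuous.mul (by fun_prop) ((Real.continuous_rpow_const hk.le).comp
      (by fun_prop : Continuous fun t : ℝ => 1 - t^2))).continuousOn
  have hint1 : IntervalIntegrable (fun t : ℝ => ((n:ℝ)+1) * (t^n * (1-t^2) ^ k))
      volume (-1) 1 :=
    (Continuous.mul (by fun_prop) ((Real.continuous_rpow_const hk.le).comp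
      (by fun_prop : Continuous fun t : ℝ => 1 - t^2))).intervalIntegrable _ _ |>.const_mul _
  have hint2 : IntervalIntegrable (fun t : ℝ => 2*k * (t^(n+2) * (1-t^2) ^ (k-1)))
      volume (-1) 1 := by
    have := (dunklIntA hk (g := fun t : ℝ => t^(n+2)) (by fun_prop)).const_mul (2*k)
    simpa [mul_assoc] using this
  have hderiv : ∀ t ∈ Ioo (-1:ℝ) 1,
      HasDerivAt (fun t : ℝ => t^(n+1) * (1-t^2) ^ k) (f' t) t := by
    intro t ht
    have hbase : (0:ℝ) < 1 - t^2 := by nlinarith [ht.1, ht.2]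
    have h1 : HasDerivAt (fun t : ℝ => 1 - t^2) (-2*t) t := by
      simpa using ((hasDerivAt_pow 2 t).const_sub 1)
    have h2 : HasDerivAt (fun u : ℝ => u ^ k) (k * (1-t^2) ^ (k-1)) (1-t^2) :=
      Real.hasDerivAt_rpow_const (Or.inl hbase.ne')
    have h4 := (hasDerivAt_pow (n+1) t).mul (h2.comp t h1)
    have e : (1-t^2) ^ k = (1-t^2) ^ (k-1) * (1-t^2) := by
      rw [← Real.rpow_add_one hbase.ne', sub_add_cancel]
    refine h4.congr_deriv ?_
    simp only [Function.comp_apply, hf']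
    rw [e]
    push_cast
    ring
  have hFTC := intervalIntegral.integral_eq_sub_of_hasDerivAt_of_le (by norm_num)
    hcont hderiv (hint1.sub hint2)
  have hzero : (1:ℝ)^(n+1) * (1-(1:ℝ)^2) ^ k - (-1:ℝ)^(n+1) * (1-(-1:ℝ)^2) ^ k = 0 := by
    norm_num [Real.zero_rpow hk.ne']
  rw [hzero] at hFTC
  rw [intervalIntegral.integral_sub hint1 hint2, intervalIntegral.integral_const_mul,
    intervalIntegral.integral_const_mul] at hFTC
  have hsplit : ∫ t in (-1:ℝ)..1, t^n * (1-t^2) ^ k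
      = dunklA k n - dunklA k (n+2) := by
    unfold dunklA
    rw [← intervalIntegral.integral_sub (dunklIntA hk (g := fun t : ℝ => t^n) (by fun_prop))
      (dunklIntA hk (g := fun t : ℝ => t^(n+2)) (by fun_prop))]
    refine dunklIntCongr (by norm_num) fun t ht => ?_
    have hbase : (0:ℝ) < 1 - t^2 := by nlinarith [ht.1, ht.2]
    have e : (1-t^2) ^ k = (1-t^2) ^ (k-1) * (1-t^2) := by
      rw [← Real.rpow_add_one hbase.ne', sub_add_cancel]
    rw [e]; ring
  rw [hsplit] at hFTC
  have h2A : dunklA k (n+2) = ∫ x in (-1:ℝ)..1, x^(n+2) * (1-x^2) ^ (k-1) := rfl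
  rw [← h2A] at hFTC
  linarith

include hk in
lemma dunklRec (i : ℕ) :
    (((i:ℝ)+1) + k*(1 - (-1:ℝ)^(i+1))) * dunklI k (i+1) = ((i:ℝ)+1) * dunklI k i := by
  rcases Nat.even_or_odd i with he | ho
  · have h1 : dunklI k (i+1) = dunklA k (i+2) := by
      rw [dunklI_eq_A hk, dunklA_odd (i+1) he.add_one, zero_add]
    have h2 : dunklI k i = dunklA k i := by
      rw [dunklI_eq_A hk, dunklA_odd (i+1) he.add_one, add_zero]
    rw [h1, h2, (he.add_one).neg_one_pow]
    linear_combination - dunklIbp hk i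
  · have h1 : dunklI k (i+1) = dunklA k (i+1) := by
      rw [dunklI_eq_A hk, dunklA_odd (i+2) (by rcases ho with ⟨m, rfl⟩; exact ⟨m+1, by ring⟩) , add_zero]
    have h2 : dunklI k i = dunklA k (i+1) := by
      rw [dunklI_eq_A hk, dunklA_odd i ho, zero_add]
    rw [h1, h2, (ho.add_one).neg_one_pow]
    ring

include hk in
lemma dunklVsum (p : Polynomial ℝ) {N : ℕ} (hN : p.natDegree < N) (x : ℝ) :
    dunklV1 k p x = ∑ n ∈ Finset.range N,
      (Real.Gamma (k + 1/2) / (Real.Gamma (1/2) * Real.Gamma k))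
        * p.coeff n * dunklI k n * x^n := by
  unfold dunklV1
  have e1 : ∀ n ∈ Finset.range N, (Real.Gamma (k + 1/2) / (Real.Gamma (1/2) * Real.Gamma k))
        * p.coeff n * dunklI k n * x^n
      = (Real.Gamma (k + 1/2) / (Real.Gamma (1/2) * Real.Gamma k)) *
        ∫ t in (-1:ℝ)..1, p.coeff n * x^n * (t^n * ((1-t) ^ (k-1) * (1+t) ^ k)) := by
    intro n _
    rw [intervalIntegral.integral_const_mul]
    unfold dunklI
    ring
  rw [Finset.sum_congr rfl e1, ← Finset.mul_sum]
  congr 1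
  rw [← intervalIntegral.integral_finset_sum (fun n _ =>
    (dunklIntI hk (g := fun t => t^n) (by fun_prop)).const_mul _)]
  refine intervalIntegral.integral_congr fun t _ => ?_
  rw [Polynomial.eval_eq_sum_range' hN, Finset.sum_mul, Finset.sum_mul]
  exact Finset.sum_congr rfl fun n _ => by rw [mul_pow]; ring

include hk in
lemma dunklI_zero :
    (Real.Gamma (k + 1/2) / (Real.Gamma (1/2) * Real.Gamma k)) * dunklI k 0 = 1 := by
  have h2k : (0:ℝ) < 2 := two_pos
  -- Step 1: affine substitution
  have hsub : dunklI k 0 = 2 * ∫ s in (0:ℝ)..1, (1-(2*s + -1)) ^ (k-1) * (2*s) ^ k := by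
    unfold dunklI
    have h := intervalIntegral.integral_comp_mul_add
      (a := (0:ℝ)) (b := 1) (c := 2) (f := fun t => t^0 * ((1-t) ^ (k-1) * (1+t) ^ k))
      (by norm_num) (-1)
    norm_num at h
    simp only [pow_zero, one_mul]
    rw [h]
    ring
  -- Step 2: pull out powers of 2
  have hstep : (∫ s in (0:ℝ)..1, (1-(2*s + -1)) ^ (k-1) * (2*s) ^ k)
      = 2 ^ (k-1) * 2 ^ k * ∫ s in (0:ℝ)..1, s ^ ((k+1)-1) * (1-s) ^ (k-1) := by
    rw [← intervalIntegral.integral_const_mul]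
    refine dunklIntCongr (by norm_num) fun s hs => ?_
    rw [show (1:ℝ)-(2*s + -1) = 2*(1-s) by ring,
      Real.mul_rpow h2k.le (by linarith [hs.2]), Real.mul_rpow h2k.le (by linarith [hs.1]),
      show k+1-1 = k by ring]
    ring
  have hBeta := dunklBeta (a := k+1) (b := k) (by linarith) hk
  -- Gamma facts
  have hGk : 0 < Real.Gamma k := Real.Gamma_pos_of_pos hk
  have hGq : 0 < Real.Gamma (k + 1/2) := Real.Gamma_pos_of_pos (by linarith)
  have hG2k : 0 < Real.Gamma (2*k) := Real.Gamma_pos_of_pos (by linarith)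
  have hsqpi : 0 < Real.sqrt π := Real.sqrt_pos.2 Real.pi_pos
  have hGhalf : Real.Gamma (1/2) = Real.sqrt π := Real.Gamma_one_half_eq
  have hdup := Real.Gamma_mul_Gamma_add_half k
  have hGk1 : Real.Gamma (k+1) = k * Real.Gamma k := Real.Gamma_add_one hk.ne'
  have hG2k1 : Real.Gamma (k+1+k) = 2*k * Real.Gamma (2*k) := by
    rw [show k+1+k = 2*k+1 by ring, Real.Gamma_add_one (by positivity)]
  have hpow : (2:ℝ) ^ (1-2*k) * ((2:ℝ) ^ (k-1) * (2:ℝ) ^ k * 2) = 2 := by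
    rw [show ((2:ℝ)^(k-1) * (2:ℝ)^k * 2) = (2:ℝ)^(k-1+k+1) by
        rw [Real.rpow_add h2k, Real.rpow_add h2k, Real.rpow_one],
      ← Real.rpow_add h2k]
    rw [show 1-2*k+(k-1+k+1) = (1:ℝ) by ring, Real.rpow_one]
  -- solve for the beta integral and finish
  have hB : (∫ s in (0:ℝ)..1, s ^ ((k+1)-1) * (1-s) ^ (k-1))
      = Real.Gamma (k+1) * Real.Gamma k / Real.Gamma (k+1+k) := by
    rw [hBeta]
    field_simp
  rw [hsub, hstep, hB, hGhalf, hGk1, hG2k1]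
  set Gq := Real.Gamma (k + 1/2) with hGqdef
  set Gk' := Real.Gamma k with hGkdef
  set G2k' := Real.Gamma (2*k) with hG2kdef
  set sp := Real.sqrt π with hspdef
  set v := (2:ℝ) ^ (k-1) with hvdef
  set w := (2:ℝ) ^ k with hwdef
  set u := (2:ℝ) ^ (1-2*k) with hudef
  have hv : 0 < v := Real.rpow_pos_of_pos h2k _
  have hw : 0 < w := Real.rpow_pos_of_pos h2k _
  field_simp
  linear_combination (v*w) * hdup + (G2k'*sp/2) * hpow


include hk in
lemma dunklPart2 (p : Polynomial ℝ) (x : ℝ) (hx : x ≠ 0) :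
    dunklT1 k (dunklV1 k p) x = dunklV1 k p.derivative x := by
  set Cst := Real.Gamma (k + 1/2) / (Real.Gamma (1/2) * Real.Gamma k) with hCst
  set N := p.natDegree + 1 with hN
  set P : Polynomial ℝ := ∑ n ∈ Finset.range (N+1),
    Polynomial.C (Cst * p.coeff n * dunklI k n) * Polynomial.X^n with hP
  have hfun : dunklV1 k p = fun y => P.eval y := by
    funext y
    rw [dunklVsum hk p (show p.natDegree < N+1 by omega) y, hP, Polynomial.eval_finset_sum]
    refine Finset.sum_congr rfl fun n _ => ?_
    simp only [Polynomial.eval_mul, Polynomial.eval_C, Polynomial.eval_pow, Polynomial.eval_X,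
      hCst]
  have hderiv : deriv (dunklV1 k p) x
      = ∑ n ∈ Finset.range (N+1), Cst * p.coeff n * dunklI k n * n * x^(n-1) := by
    rw [hfun, Polynomial.deriv, hP, Polynomial.derivative_sum]
    simp only [Polynomial.derivative_C_mul_X_pow]
    rw [Polynomial.eval_finset_sum]
    refine Finset.sum_congr rfl fun n _ => ?_
    simp [mul_assoc]
  have hRHS := dunklVsum hk p.derivative
    (show p.derivative.natDegree < N by
      have := Polynomial.natDegree_derivative_le p
      omega) x
  simp only [dunklT1]
  rw [hderiv, dunklVsum hk p (show p.natDegree < N+1 by omega) x,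
    dunklVsum hk p (show p.natDegree < N+1 by omega) (-x), hRHS]
  rw [← Finset.sum_sub_distrib, Finset.mul_sum, Finset.sum_div, ← Finset.sum_add_distrib]
  rw [Finset.sum_range_succ' _ N]
  have hzero : Cst * p.coeff 0 * dunklI k 0 * (0:ℕ) * x^(0-1)
      + k * (Cst * p.coeff 0 * dunklI k 0 * x^0 - Cst * p.coeff 0 * dunklI k 0 * (-x)^0) / x
      = 0 := by
    simp
  rw [hzero, add_zero]
  refine Finset.sum_congr rfl fun i _ => ?_
  have hrec := dunklRec hk i
  have hcoeff : p.derivative.coeff i = p.coeff (i+1) * (i+1) := by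
    rw [Polynomial.coeff_derivative]
  rw [hcoeff]
  have hnegpow : (-x)^(i+1) = (-1:ℝ)^(i+1) * x^(i+1) := by
    rw [neg_pow]
  rw [hnegpow, show (i+1)-1 = i from rfl]
  rw [← hCst]
  field_simp
  push_cast
  linear_combination (Cst * p.coeff (i+1) * x^(i+1)) * hrec

end DunklAux

theorem rank_one_intertwining (k : ℝ) (hk : 0 < k) :
    (∀ x : ℝ, dunklV1 k 1 x = 1) ∧
    (∀ (p : Polynomial ℝ) (x : ℝ), x ≠ 0 →
      dunklT1 k (dunklV1 k p) x = dunklV1 k p.derivative x) := by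
  constructor
  · intro x
    rw [dunklVsum hk 1 (N := 1) (by simp) x]
    simp only [Finset.sum_range_one, Polynomial.coeff_one_zero, pow_zero, mul_one]
    exact dunklI_zero hk
  · exact fun p x hx => dunklPart2 hk p x hx
end

section
/- For k > 0 and each natural number n, V_k(xⁿ) = c_n · xⁿ where c_n = (Γ(k+1/2)/(Γ(1/2)Γ(k))) ∫₋₁¹ tⁿ (1-t)^{k-1}(1+t)^k dt; explicitly c_{2j} = (1/2)_j/(k+1/2)_j and c_{2j+1} = (1/2)_{j+1}/((k+1/2)_{j+1}) · 1, i.e. c_n is given by ratios of Pochhammer symbols, and in particular 0 < c_n ≤ 1 with c₀ = 1. -/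
open MeasureTheory intervalIntegral Set Filter

lemma real_beta (a b : ℝ) (ha : 0 < a) (hb : 0 < b) :
    ∫ x in (0:ℝ)..1, x ^ (a-1) * (1-x) ^ (b-1)
      = Real.Gamma a * Real.Gamma b / Real.Gamma (a+b) := by
  have h := Complex.Gamma_mul_Gamma_eq_betaIntegral (s := (a:ℂ)) (t := (b:ℂ))
    (by simpa using ha) (by simpa using hb)
  have hB : Complex.betaIntegral (a:ℂ) (b:ℂ)
      = ((∫ x in (0:ℝ)..1, x ^ (a-1) * (1-x) ^ (b-1) : ℝ) : ℂ) := by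
    unfold Complex.betaIntegral
    rw [intervalIntegral.integral_congr
      (g := fun x : ℝ => ((x ^ (a-1) * (1-x) ^ (b-1) : ℝ) : ℂ)) ?_]
    · exact RCLike.intervalIntegral_ofReal
    intro x hx
    rw [uIcc_of_le (by norm_num : (0:ℝ) ≤ 1)] at hx
    have h1 : (0:ℝ) ≤ x := hx.1
    have h2 : (0:ℝ) ≤ 1 - x := by linarith [hx.2]
    simp only [Complex.ofReal_mul, Complex.ofReal_cpow h1, Complex.ofReal_cpow h2]
    push_cast
    ring_nf
  rw [hB, ← Complex.ofReal_add, Complex.Gamma_ofReal, Complex.Gamma_ofReal,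
    Complex.Gamma_ofReal] at h
  have h' : Real.Gamma a * Real.Gamma b
      = Real.Gamma (a+b) * ∫ x in (0:ℝ)..1, x ^ (a-1) * (1-x) ^ (b-1) := by
    exact_mod_cast h
  have hG : Real.Gamma (a+b) ≠ 0 := (Real.Gamma_pos_of_pos (by linarith)).ne'
  field_simp [hG] at h' ⊢
  linarith [h']

lemma rpow_split {x : ℝ} (hx : 0 ≤ x) {k : ℝ} (hk : k ≠ 0) : x ^ k = x ^ (k-1) * x := by
  rcases eq_or_lt_of_le hx with h | h
  · rw [← h, Real.zero_rpow hk, mul_zero]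
  · rw [← Real.rpow_add_one h.ne' (k-1)]
    ring_nf

lemma sq_split {t : ℝ} (h1 : 0 ≤ 1 - t) (h2 : 0 ≤ 1 + t) (p : ℝ) :
    (1 - t^2) ^ p = (1-t) ^ p * (1+t) ^ p := by
  rw [show (1 - t^2 : ℝ) = (1-t) * (1+t) by ring, Real.mul_rpow h1 h2]

lemma integJ_right (k : ℝ) (hk : 0 < k) (m : ℕ) :
    IntervalIntegrable (fun t : ℝ => t ^ m * (1 - t^2) ^ (k-1)) volume 0 1 := by
  have h1 : IntervalIntegrable (fun t : ℝ => (1-t) ^ (k-1)) volume 0 1 := by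
    have := (intervalIntegrable_rpow' (a := 0) (b := 1) (by linarith : (-1:ℝ) < k - 1)).comp_sub_left 1
    simpa using this.symm
  have h2 : ContinuousOn (fun t : ℝ => t ^ m * (1+t) ^ (k-1)) (uIcc 0 1) := by
    apply (continuousOn_pow m).mul
    apply ContinuousOn.rpow_const
    · fun_prop
    · intro x hx
      rw [uIcc_of_le (by norm_num : (0:ℝ) ≤ 1)] at hx
      left
      have := hx.1
      positivity
  have h3 := h1.mul_continuousOn h2
  apply h3.congr_ae
  refine (ae_restrict_iff' measurableSet_uIoc).mpr (ae_of_all _ fun t ht => ?_)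
  rw [uIoc_of_le (by norm_num : (0:ℝ) ≤ 1)] at ht
  simp only
  rw [sq_split (by linarith [ht.2]) (by linarith [ht.1.le])]
  ring

lemma integJ_left (k : ℝ) (hk : 0 < k) (m : ℕ) :
    IntervalIntegrable (fun t : ℝ => t ^ m * (1 - t^2) ^ (k-1)) volume (-1) 0 := by
  have h1 : IntervalIntegrable (fun t : ℝ => (1+t) ^ (k-1)) volume (-1) 0 := by
    have := (intervalIntegrable_rpow' (a := 0) (b := 1)
      (by linarith : (-1:ℝ) < k - 1)).comp_add_right 1
    simp only [zero_sub, sub_self] at this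
    apply this.congr_ae
    refine (ae_restrict_iff' measurableSet_uIoc).mpr (ae_of_all _ fun t _ => ?_)
    simp [add_comm]
  have h2 : ContinuousOn (fun t : ℝ => t ^ m * (1-t) ^ (k-1)) (uIcc (-1) 0) := by
    apply (continuousOn_pow m).mul
    apply ContinuousOn.rpow_const
    · fun_prop
    · intro x hx
      rw [uIcc_of_le (by norm_num : (-1:ℝ) ≤ 0)] at hx
      left
      have := hx.2
      nlinarith
  have h3 := h1.mul_continuousOn h2
  apply h3.congr_ae
  refine (ae_restrict_iff' measurableSet_uIoc).mpr (ae_of_all _ fun t ht => ?_)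
  rw [uIoc_of_le (by norm_num : (-1:ℝ) ≤ 0)] at ht
  simp only
  rw [sq_split (by linarith [ht.2]) (by linarith [ht.1.le])]
  ring

lemma integJ (k : ℝ) (hk : 0 < k) (m : ℕ) :
    IntervalIntegrable (fun t : ℝ => t ^ m * (1 - t^2) ^ (k-1)) volume (-1) 1 :=
  (integJ_left k hk m).trans (integJ_right k hk m)

lemma K_odd (k : ℝ) (m : ℕ) (hm : Odd m) :
    ∫ t in (-1:ℝ)..1, t ^ m * (1 - t^2) ^ (k-1) = 0 := by
  have h := intervalIntegral.integral_comp_neg (a := (-1:ℝ)) (b := 1)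
    (fun t : ℝ => t ^ m * (1 - t^2) ^ (k-1))
  simp only [neg_neg] at h
  have h2 : (∫ x in (-1:ℝ)..1, (-x) ^ m * (1 - (-x)^2) ^ (k-1))
      = ∫ x in (-1:ℝ)..1, -(x ^ m * (1 - x^2) ^ (k-1)) := by
    apply intervalIntegral.integral_congr
    intro x _
    simp only [hm.neg_pow]
    ring_nf
  rw [h2, intervalIntegral.integral_neg] at h
  linarith

lemma K_even (k : ℝ) (hk : 0 < k) (m : ℕ) (hm : Even m) :
    ∫ t in (-1:ℝ)..1, t ^ m * (1 - t^2) ^ (k-1)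
      = 2 * ∫ t in (0:ℝ)..1, t ^ m * (1 - t^2) ^ (k-1) := by
  rw [← intervalIntegral.integral_add_adjacent_intervals
    (integJ_left k hk m) (integJ_right k hk m), two_mul]
  congr 1
  have h := intervalIntegral.integral_comp_neg (a := (0:ℝ)) (b := 1)
    (fun t : ℝ => t ^ m * (1 - t^2) ^ (k-1))
  simp only [neg_zero] at h
  rw [← h]
  apply intervalIntegral.integral_congr
  intro x _
  simp only [hm.neg_pow]
  ring_nf

lemma I_eq (k : ℝ) (hk : 0 < k) (n : ℕ) :
    ∫ t in (-1:ℝ)..1, t ^ n * (1-t) ^ (k-1) * (1+t) ^ k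
      = (∫ t in (-1:ℝ)..1, t ^ n * (1 - t^2) ^ (k-1))
        + ∫ t in (-1:ℝ)..1, t ^ (n+1) * (1 - t^2) ^ (k-1) := by
  rw [← intervalIntegral.integral_add (integJ k hk n) (integJ k hk (n+1))]
  apply intervalIntegral.integral_congr
  intro t ht
  rw [uIcc_of_le (by norm_num : (-1:ℝ) ≤ 1)] at ht
  have h1 : (0:ℝ) ≤ 1 - t := by linarith [ht.2]
  have h2 : (0:ℝ) ≤ 1 + t := by linarith [ht.1]
  simp only
  rw [rpow_split h2 hk.ne', sq_split h1 h2]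
  ring

lemma J_rec (k : ℝ) (hk : 0 < k) (m : ℕ) :
    (2*k + m + 1) * ∫ t in (0:ℝ)..1, t ^ (m+2) * (1 - t^2) ^ (k-1)
      = (m+1) * ∫ t in (0:ℝ)..1, t ^ m * (1 - t^2) ^ (k-1) := by
  set f' : ℝ → ℝ := fun t =>
    (m+1) * (t ^ m * (1 - t^2) ^ (k-1)) - (2*k+m+1) * (t ^ (m+2) * (1 - t^2) ^ (k-1)) with hf'
  set g : ℝ → ℝ := fun t => t ^ (m+1) * (1 - t^2) ^ k with hg
  have hderiv : ∀ t ∈ Ioo (0:ℝ) 1, HasDerivAt g (f' t) t := by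
    intro t ht
    have h0 : (0:ℝ) < 1 - t^2 := by nlinarith [ht.1, ht.2]
    have hrp : HasDerivAt (fun y : ℝ => y ^ k) (k * (1-t^2) ^ (k-1)) (1-t^2) :=
      Real.hasDerivAt_rpow_const (Or.inl h0.ne')
    have hin : HasDerivAt (fun t : ℝ => 1 - t^2) (-(2*t)) t := by
      simpa using (hasDerivAt_pow 2 t).const_sub 1
    have hcomp := hrp.comp t hin
    have hpow : HasDerivAt (fun t : ℝ => t ^ (m+1)) ((m+1) * t ^ m) t := by
      simpa using hasDerivAt_pow (m+1) t
    have := hpow.mul hcomp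
    refine this.congr_deriv ?_
    rw [hf']
    simp only [Function.comp]
    rw [rpow_split h0.le hk.ne']
    ring
  have hint : IntervalIntegrable f' volume 0 1 :=
    ((integJ_right k hk m).const_mul _).sub ((integJ_right k hk (m+2)).const_mul _)
  have ht0 : Filter.Tendsto g (nhdsWithin 0 (Ioi 0)) (nhds 0) := by
    have hc : ContinuousAt g 0 := by
      apply ContinuousAt.mul (by fun_prop)
      exact ContinuousAt.rpow_const (by fun_prop) (Or.inr hk.le)
    have hg0 : g 0 = 0 := by simp [hg]
    have h2 := hc.tendsto.mono_left (nhdsWithin_le_nhds (s := Ioi (0:ℝ)))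
    rwa [hg0] at h2
  have ht1 : Filter.Tendsto g (nhdsWithin 1 (Iio 1)) (nhds 0) := by
    have hc : ContinuousAt g 1 := by
      apply ContinuousAt.mul (by fun_prop)
      exact ContinuousAt.rpow_const (by fun_prop) (Or.inr hk.le)
    have hg1 : g 1 = 0 := by simp [hg, Real.zero_rpow hk.ne']
    have h2 := hc.tendsto.mono_left (nhdsWithin_le_nhds (s := Iio (1:ℝ)))
    rwa [hg1] at h2
  have key := intervalIntegral.integral_eq_sub_of_hasDerivAt_of_tendsto
    zero_lt_one hderiv hint ht0 ht1
  rw [sub_zero] at key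
  rw [hf'] at key
  rw [intervalIntegral.integral_sub ((integJ_right k hk m).const_mul _)
    ((integJ_right k hk (m+2)).const_mul _), intervalIntegral.integral_const_mul,
    intervalIntegral.integral_const_mul] at key
  linarith [key]

lemma I_zero (k : ℝ) (hk : 0 < k) :
    ∫ t in (-1:ℝ)..1, (1-t) ^ (k-1) * (1+t) ^ k
      = (2:ℝ) ^ (2*k) * (Real.Gamma (k+1) * Real.Gamma k / Real.Gamma (k+1+k)) := by
  have hsub := intervalIntegral.integral_comp_mul_add
    (a := (0:ℝ)) (b := 1) (f := fun t : ℝ => (1-t) ^ (k-1) * (1+t) ^ k)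
    (c := 2) (two_ne_zero) (-1)
  norm_num at hsub
  have h2 : (∫ x in (0:ℝ)..1, (1-(2*x + -1)) ^ (k-1) * (2*x) ^ k)
      = ((2:ℝ) ^ (k-1) * (2:ℝ) ^ k) * ∫ x in (0:ℝ)..1, x ^ ((k+1)-1) * (1-x) ^ (k-1) := by
    rw [← intervalIntegral.integral_const_mul]
    apply intervalIntegral.integral_congr
    intro x hx
    rw [uIcc_of_le (by norm_num : (0:ℝ) ≤ 1)] at hx
    have hx1 : (0:ℝ) ≤ x := hx.1
    have hx2 : (0:ℝ) ≤ 1 - x := by linarith [hx.2]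
    simp only
    rw [show (1 - (2*x + -1) : ℝ) = 2 * (1-x) by ring,
      Real.mul_rpow (by norm_num) hx2, Real.mul_rpow (by norm_num) hx1,
      show k + 1 - 1 = k by ring]
    ring
  rw [real_beta (k+1) k (by linarith) hk] at h2
  rw [h2] at hsub
  have hp : (2:ℝ) ^ (k-1) * (2:ℝ) ^ k * 2 = 2 ^ (2*k) := by
    rw [← Real.rpow_add two_pos, ← Real.rpow_add_one (two_ne_zero)]
    ring_nf
  set R := Real.Gamma (k+1) * Real.Gamma k / Real.Gamma (k+1+k)
  have : (∫ t in (-1:ℝ)..1, (1-t) ^ (k-1) * (1+t) ^ k)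
      = 2 ^ (k-1) * 2 ^ k * 2 * R := by linarith
  rw [this, hp]

lemma c_zero (k : ℝ) (hk : 0 < k) :
    (Real.Gamma (k + 1/2) / (Real.Gamma (1/2) * Real.Gamma k)) *
      ∫ t in (-1:ℝ)..1, (1-t) ^ (k-1) * (1+t) ^ k = 1 := by
  have hΓk : Real.Gamma k ≠ 0 := (Real.Gamma_pos_of_pos hk).ne'
  have hΓ2k : Real.Gamma (2*k) ≠ 0 := (Real.Gamma_pos_of_pos (by linarith)).ne'
  have hΓh : Real.Gamma (k + 1/2) ≠ 0 := (Real.Gamma_pos_of_pos (by linarith)).ne'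
  have hsπ : Real.sqrt Real.pi ≠ 0 := (Real.sqrt_pos.mpr Real.pi_pos).ne'
  have h1 : Real.Gamma (k+1) = k * Real.Gamma k := Real.Gamma_add_one hk.ne'
  have h2 : Real.Gamma (k+1+k) = 2*k * Real.Gamma (2*k) := by
    rw [show k+1+k = 2*k+1 by ring, Real.Gamma_add_one (by positivity)]
  have hdup := Real.Gamma_mul_Gamma_add_half k
  have hpow : (2:ℝ) ^ (2*k) * (2:ℝ) ^ (1-2*k) = 2 := by
    rw [← Real.rpow_add two_pos]
    norm_num
  rw [I_zero k hk, Real.Gamma_one_half_eq, h1, h2]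
  set Gh := Real.Gamma (k + 1/2) with hGh
  field_simp
  linear_combination (2:ℝ)^(2*k) * hdup
    + (Real.Gamma (2*k) * Real.sqrt Real.pi) * hpow

lemma poch_succ (x : ℝ) (j : ℕ) :
    (ascPochhammer ℝ (j+1)).eval x = (ascPochhammer ℝ j).eval x * (x + j) := by
  rw [ascPochhammer_succ_right]
  simp [Polynomial.eval_mul]

lemma poch_pos {x : ℝ} (hx : 0 < x) (j : ℕ) : 0 < (ascPochhammer ℝ j).eval x := by
  induction j with
  | zero => simp
  | succ j ih =>
    rw [poch_succ]
    have : (0:ℝ) < x + j := by positivity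
    positivity

lemma poch_le {x y : ℝ} (hx : 0 < x) (hxy : x ≤ y) (j : ℕ) :
    (ascPochhammer ℝ j).eval x ≤ (ascPochhammer ℝ j).eval y := by
  induction j with
  | zero => simp
  | succ j ih =>
    rw [poch_succ, poch_succ]
    apply mul_le_mul ih (by linarith) (by positivity) (poch_pos (by linarith) j).le

lemma I_even_eq (k : ℝ) (hk : 0 < k) (j : ℕ) :
    ∫ t in (-1:ℝ)..1, t ^ (2*j) * (1-t) ^ (k-1) * (1+t) ^ k
      = 2 * ∫ t in (0:ℝ)..1, t ^ (2*j) * (1 - t^2) ^ (k-1) := by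
  rw [I_eq k hk (2*j), K_even k hk (2*j) (even_two_mul j), K_odd k _ ⟨j, rfl⟩]
  ring

lemma c_even (k : ℝ) (hk : 0 < k) (j : ℕ) :
    (Real.Gamma (k + 1/2) / (Real.Gamma (1/2) * Real.Gamma k)) *
      ∫ t in (-1:ℝ)..1, t ^ (2*j) * (1-t) ^ (k-1) * (1+t) ^ k
    = (ascPochhammer ℝ j).eval ((1:ℝ)/2) / (ascPochhammer ℝ j).eval (k + 1/2) := by
  induction j with
  | zero =>
    simp only [Nat.mul_zero, pow_zero, one_mul, ascPochhammer_zero, Polynomial.eval_one]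
    rw [c_zero k hk]
    norm_num
  | succ j ih =>
    have e1 := I_even_eq k hk j
    have e2 := I_even_eq k hk (j+1)
    have hrec := J_rec k hk (2*j)
    simp only [show 2*j+2 = 2*(j+1) from by ring] at hrec
    push_cast at hrec
    set A := Real.Gamma (k + 1/2) / (Real.Gamma (1/2) * Real.Gamma k) with hA
    set a := ∫ t in (0:ℝ)..1, t ^ (2*(j+1)) * (1 - t^2) ^ (k-1) with ha
    set b := ∫ t in (0:ℝ)..1, t ^ (2*j) * (1 - t^2) ^ (k-1) with hb
    rw [e1] at ih
    rw [e2, poch_succ, poch_succ]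
    have hq : (ascPochhammer ℝ j).eval (k + 1/2) ≠ 0 := (poch_pos (by linarith) j).ne'
    have hq2 : (k + 1/2 + j : ℝ) ≠ 0 := by positivity
    have hd : (2*k + 2*j + 1 : ℝ) ≠ 0 := by positivity
    rw [eq_div_iff (mul_ne_zero hq hq2)]
    rw [eq_div_iff hq] at ih
    have key : A * (2 * a) * (2*k + 2*j + 1) = A * (2 * b) * (2*j+1) := by
      have := congrArg (fun z => A * 2 * z) hrec
      ring_nf
      ring_nf at this
      linarith [this]
    have goal2 : (A * (2*a)) * ((ascPochhammer ℝ j).eval (k + 1/2) * (k + 1/2 + j)) * (2*(2*k + 2*j + 1))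
        = (ascPochhammer ℝ j).eval ((1:ℝ)/2) * ((1:ℝ)/2 + j) * (2*(2*k + 2*j + 1)) := by
      calc (A * (2*a)) * ((ascPochhammer ℝ j).eval (k + 1/2) * (k + 1/2 + j)) * (2*(2*k + 2*j + 1))
          = (A * (2*a) * (2*k + 2*j + 1)) * ((ascPochhammer ℝ j).eval (k + 1/2)) * (2*(k + 1/2 + j)) := by ring
        _ = (A * (2*b) * (2*j+1)) * ((ascPochhammer ℝ j).eval (k + 1/2)) * (2*(k + 1/2 + j)) := by rw [key]
        _ = (A * (2*b) * ((ascPochhammer ℝ j).eval (k + 1/2))) * ((2*j+1) * (2*(k + 1/2 + j))) := by ring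
        _ = (ascPochhammer ℝ j).eval ((1:ℝ)/2) * ((2*j+1) * (2*(k + 1/2 + j))) := by rw [ih]
        _ = (ascPochhammer ℝ j).eval ((1:ℝ)/2) * ((1:ℝ)/2 + j) * (2*(2*k + 2*j + 1)) := by ring
    have h2n : (2*(2*k + 2*j + 1) : ℝ) ≠ 0 := by positivity
    exact mul_right_cancel₀ h2n goal2

lemma c_odd (k : ℝ) (hk : 0 < k) (j : ℕ) :
    (Real.Gamma (k + 1/2) / (Real.Gamma (1/2) * Real.Gamma k)) *
      ∫ t in (-1:ℝ)..1, t ^ (2*j+1) * (1-t) ^ (k-1) * (1+t) ^ k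
    = (ascPochhammer ℝ (j+1)).eval ((1:ℝ)/2) / (ascPochhammer ℝ (j+1)).eval (k + 1/2) := by
  have e : ∫ t in (-1:ℝ)..1, t ^ (2*j+1) * (1-t) ^ (k-1) * (1+t) ^ k
      = ∫ t in (-1:ℝ)..1, t ^ (2*(j+1)) * (1-t) ^ (k-1) * (1+t) ^ k := by
    rw [I_eq k hk (2*j+1), K_odd k (2*j+1) ⟨j, rfl⟩, I_even_eq k hk (j+1)]
    simp only [show 2*j+1+1 = 2*(j+1) from by ring]
    rw [K_even k hk (2*(j+1)) (even_two_mul (j+1))]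
    ring
  rw [e]
  exact c_even k hk (j+1)

theorem rank_one_eigenvalues (k : ℝ) (hk : 0 < k) (n : ℕ) :
    let c : ℕ → ℝ := fun n =>
      (Real.Gamma (k + 1/2) / (Real.Gamma (1/2) * Real.Gamma k)) *
        ∫ t in (-1:ℝ)..1, t ^ n * (1 - t) ^ (k - 1) * (1 + t) ^ k
    (∀ x : ℝ, dunklV1 k (Polynomial.X ^ n) x = c n * x ^ n)
    ∧ (∀ j : ℕ, c (2 * j)
        = (ascPochhammer ℝ j).eval ((1:ℝ)/2) / (ascPochhammer ℝ j).eval (k + 1/2))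
    ∧ (∀ j : ℕ, c (2 * j + 1)
        = (ascPochhammer ℝ (j + 1)).eval ((1:ℝ)/2) / (ascPochhammer ℝ (j + 1)).eval (k + 1/2))
    ∧ 0 < c n ∧ c n ≤ 1 ∧ c 0 = 1 := by
  intro c
  have hcn : ∀ m : ℕ, ∃ j : ℕ, c m
      = (ascPochhammer ℝ j).eval ((1:ℝ)/2) / (ascPochhammer ℝ j).eval (k + 1/2) := by
    intro m
    rcases Nat.even_or_odd m with ⟨j, hj⟩ | ⟨j, hj⟩
    · refine ⟨j, ?_⟩
      rw [show m = 2*j from by omega]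
      exact c_even k hk j
    · refine ⟨j+1, ?_⟩
      rw [show m = 2*j+1 from by omega]
      exact c_odd k hk j
  have hbound : ∀ m : ℕ, 0 < c m ∧ c m ≤ 1 := by
    intro m
    obtain ⟨j, hj⟩ := hcn m
    rw [hj]
    constructor
    · exact div_pos (poch_pos (by norm_num) j) (poch_pos (by linarith) j)
    · rw [div_le_one (poch_pos (by linarith) j)]
      exact poch_le (by norm_num) (by linarith) j
  refine ⟨?_, fun j => c_even k hk j, fun j => c_odd k hk j, (hbound n).1, (hbound n).2, ?_⟩
  · intro x
    unfold dunklV1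
    have e : (∫ t in (-1:ℝ)..1, (Polynomial.X ^ n).eval (x*t) * (1-t) ^ (k-1) * (1+t) ^ k)
        = x ^ n * ∫ t in (-1:ℝ)..1, t ^ n * (1-t) ^ (k-1) * (1+t) ^ k := by
      rw [← intervalIntegral.integral_const_mul]
      apply intervalIntegral.integral_congr
      intro t _
      simp only [Polynomial.eval_pow, Polynomial.eval_X, mul_pow]
      ring
    rw [e]
    show Real.Gamma (k + 1/2) / (Real.Gamma (1/2) * Real.Gamma k)
        * (x ^ n * ∫ t in (-1:ℝ)..1, t ^ n * (1-t) ^ (k-1) * (1+t) ^ k) = _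
    ring
  · have h := c_even k hk 0
    simp only [ascPochhammer_zero, Polynomial.eval_one, div_one] at h
    exact h
end
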